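/- arXiv:2006.13341 — 3 statements merged into one kernel-verified Lean document; each statement's English description precedes it below -/
import Mathlib

section
/- Let C ∈ ℝ^{n×n} with ‖C‖ < 1 (operator norm), μ ∈ ℝⁿ, and M = [[C, μ],[0ᵀ, 0]]. Then the series Σ_{m=1}^{∞} ((−1)^{m−1}/m) M^m converges, the series L(C) = Σ_{m=1}^{∞} ((−1)^{m−1}/m) C^m and N(C) = Σ_{m=1}^{∞} ((−1)^{m−1}/m) C^{m−1} converge, and Σ_{m=1}^{∞} ((−1)^{m−1}/m) M^m = [[L(C), N(C)μ],[0ᵀ, 0]]. If in addition C is invertible, then N(C)μ = C⁻¹ L(C) μ. -/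
open Matrix
open scoped Matrix.Norms.L2Operator

/-- The block matrix `M = [[C, μ],[0ᵀ, 0]]`. -/
def blockM {n : ℕ} (C : Matrix (Fin n) (Fin n) ℝ) (μ : Fin n → ℝ) :
    Matrix (Fin n ⊕ Fin 1) (Fin n ⊕ Fin 1) ℝ :=
  Matrix.fromBlocks C (Matrix.of fun i (_ : Fin 1) => μ i) 0 0

private lemma blockM_pow_succ {n : ℕ} (C : Matrix (Fin n) (Fin n) ℝ) (μ : Fin n → ℝ) :
    ∀ m : ℕ, blockM C μ ^ (m + 1) =
      Matrix.fromBlocks (C ^ (m + 1)) (C ^ m * Matrix.of fun i (_ : Fin 1) => μ i) 0 0 := by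
  intro m
  induction m with
  | zero => simp [blockM]
  | succ k ih =>
    rw [pow_succ, ih, blockM, Matrix.fromBlocks_multiply]
    simp [← pow_succ]

/-- `fromBlocks · · 0 0` as a linear map. -/
private noncomputable def blockLM (n : ℕ) :
    (Matrix (Fin n) (Fin n) ℝ × Matrix (Fin n) (Fin 1) ℝ) →ₗ[ℝ]
      Matrix (Fin n ⊕ Fin 1) (Fin n ⊕ Fin 1) ℝ where
  toFun p := Matrix.fromBlocks p.1 p.2 0 0
  map_add' p q := by rw [Matrix.fromBlocks_add]; simp
  map_smul' r p := by rw [RingHom.id_apply, Matrix.fromBlocks_smul]; simp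
/-- Right multiplication by the column vector of `μ`, as a linear map. -/
private noncomputable def colLM {n : ℕ} (μ : Fin n → ℝ) :
    Matrix (Fin n) (Fin n) ℝ →ₗ[ℝ] Matrix (Fin n) (Fin 1) ℝ where
  toFun X := X * Matrix.of fun i (_ : Fin 1) => μ i
  map_add' p q := by simp [Matrix.add_mul]
  map_smul' r p := by simp [Matrix.smul_mul]

/-- Left multiplication by `C`, as a linear map. -/
private noncomputable def mulLM {n : ℕ} (C : Matrix (Fin n) (Fin n) ℝ) :
    Matrix (Fin n) (Fin n) ℝ →ₗ[ℝ] Matrix (Fin n) (Fin n) ℝ where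
  toFun X := C * X
  map_add' p q := by simp [Matrix.mul_add]
  map_smul' r p := by simp [Matrix.mul_smul]

/-- if `‖C‖ < 1` (operator norm) then the logarithm series of
`M = [[C, μ],[0ᵀ, 0]]` converges, the series `L(C) = Σ_{m≥1} ((−1)^{m−1}/m) C^m` and
`N(C) = Σ_{m≥1} ((−1)^{m−1}/m) C^{m−1}` converge, and
`Σ_{m≥1} ((−1)^{m−1}/m) M^m = [[L(C), N(C)μ],[0ᵀ, 0]]`; if moreover `C` is invertible then
`N(C)μ = C⁻¹ L(C) μ`.  (All series are indexed over `ℕ`; the `m = 0` coefficient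
`(−1)^{0−1}/0 = 0` vanishes, so these sums are exactly the sums over `m ≥ 1`.) -/
theorem blockM_log_series {n : ℕ} (C : Matrix (Fin n) (Fin n) ℝ) (μ : Fin n → ℝ)
    (hC : ‖C‖ < 1) :
    Summable (fun m : ℕ => ((-1 : ℝ) ^ (m - 1) / (m : ℝ)) • blockM C μ ^ m) ∧
    Summable (fun m : ℕ => ((-1 : ℝ) ^ (m - 1) / (m : ℝ)) • C ^ m) ∧
    Summable (fun m : ℕ => ((-1 : ℝ) ^ (m - 1) / (m : ℝ)) • C ^ (m - 1)) ∧
    (∑' m : ℕ, ((-1 : ℝ) ^ (m - 1) / (m : ℝ)) • blockM C μ ^ m) =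
      blockM (∑' m : ℕ, ((-1 : ℝ) ^ (m - 1) / (m : ℝ)) • C ^ m)
        ((∑' m : ℕ, ((-1 : ℝ) ^ (m - 1) / (m : ℝ)) • C ^ (m - 1)) *ᵥ μ) ∧
    (IsUnit C →
      (∑' m : ℕ, ((-1 : ℝ) ^ (m - 1) / (m : ℝ)) • C ^ (m - 1)) *ᵥ μ =
        (C⁻¹ * ∑' m : ℕ, ((-1 : ℝ) ^ (m - 1) / (m : ℝ)) • C ^ m) *ᵥ μ) := by
  classical
  set coef : ℕ → ℝ := fun m => (-1 : ℝ) ^ (m - 1) / (m : ℝ) with hcoef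
  have hcoef0 : coef 0 = 0 := by simp [hcoef]
  have hcoefabs : ∀ m : ℕ, ‖coef m‖ ≤ 1 := by
    intro m
    rw [hcoef]
    rw [Real.norm_eq_abs, abs_div, abs_pow, abs_neg, abs_one, one_pow, Nat.abs_cast]
    cases m with
    | zero => norm_num
    | succ k =>
      rw [div_le_one (by positivity)]
      exact_mod_cast Nat.succ_le_succ (Nat.zero_le k)
  have hone : ‖(1 : Matrix (Fin n) (Fin n) ℝ)‖ ≤ 1 := by
    rw [Matrix.cstar_norm_def, _root_.map_one]
    rw [ContinuousLinearMap.one_def]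
    exact ContinuousLinearMap.norm_id_le
  have hCp : ∀ m : ℕ, ‖C ^ m‖ ≤ ‖C‖ ^ m := by
    intro m
    cases m with
    | zero => simpa using hone
    | succ k => exact norm_pow_le' C k.succ_pos
  have hr : Summable (fun m : ℕ => ‖C‖ ^ m) :=
    summable_geometric_of_lt_one (norm_nonneg C) hC
  have ha : Summable (fun m : ℕ => coef m • C ^ m) := by
    refine Summable.of_norm_bounded hr fun m => ?_
    rw [norm_smul]
    calc ‖coef m‖ * ‖C ^ m‖ ≤ 1 * ‖C‖ ^ m :=
          mul_le_mul (hcoefabs m) (hCp m) (norm_nonneg _) zero_le_one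
      _ = ‖C‖ ^ m := one_mul _
  have hrs : Summable (fun m : ℕ => ‖C‖ ^ (m - 1)) := by
    refine (summable_nat_add_iff 1).mp ?_
    simpa using hr
  have hb : Summable (fun m : ℕ => coef m • C ^ (m - 1)) := by
    refine Summable.of_norm_bounded hrs fun m => ?_
    rw [norm_smul]
    calc ‖coef m‖ * ‖C ^ (m - 1)‖ ≤ 1 * ‖C‖ ^ (m - 1) :=
          mul_le_mul (hcoefabs m) (hCp (m - 1)) (norm_nonneg _) zero_le_one
      _ = ‖C‖ ^ (m - 1) := one_mul _
  -- continuity of the auxiliary linear maps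
  have hΦc : Continuous (blockLM n) := (blockLM n).continuous_of_finiteDimensional
  have hΨc : Continuous (colLM μ) := (colLM μ).continuous_of_finiteDimensional
  have hΞc : Continuous (mulLM C) := (mulLM C).continuous_of_finiteDimensional
  have hbμ : Summable (fun m : ℕ => colLM μ (coef m • C ^ (m - 1))) :=
    hb.map (colLM μ) hΨc
  have hps :
      HasSum (fun m : ℕ => ((coef m • C ^ m, colLM μ (coef m • C ^ (m - 1))) :
        Matrix (Fin n) (Fin n) ℝ × Matrix (Fin n) (Fin 1) ℝ))
        (∑' m : ℕ, coef m • C ^ m, ∑' m : ℕ, colLM μ (coef m • C ^ (m - 1))) :=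
    ha.hasSum.prodMk hbμ.hasSum
  have hterm : ∀ m : ℕ, coef m • blockM C μ ^ m =
      blockLM n (coef m • C ^ m, colLM μ (coef m • C ^ (m - 1))) := by
    intro m
    cases m with
    | zero => simp [hcoef0, blockLM]
    | succ k =>
      rw [blockM_pow_succ]
      simp only [blockLM, colLM, LinearMap.coe_mk, AddHom.coe_mk, Nat.add_sub_cancel,
        Matrix.smul_mul]
      rw [Matrix.fromBlocks_smul]
      simp
  have hM : Summable (fun m : ℕ => coef m • blockM C μ ^ m) :=
    (hps.summable.map (blockLM n) hΦc).congr fun m => (hterm m).symm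
  have hcol : ∀ N : Matrix (Fin n) (Fin n) ℝ,
      colLM μ N = Matrix.of fun i (_ : Fin 1) => (N *ᵥ μ) i := by
    intro N
    ext i j
    simp [colLM, Matrix.mul_apply, Matrix.mulVec, dotProduct]
  refine ⟨hM, ha, hb, ?_, ?_⟩
  · calc (∑' m : ℕ, coef m • blockM C μ ^ m)
        = ∑' m : ℕ, blockLM n (coef m • C ^ m, colLM μ (coef m • C ^ (m - 1))) :=
          tsum_congr hterm
      _ = blockLM n (∑' m : ℕ, coef m • C ^ m, ∑' m : ℕ, colLM μ (coef m • C ^ (m - 1))) :=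
          (hps.map (blockLM n) hΦc).tsum_eq
      _ = _ := by
          rw [show (∑' m : ℕ, colLM μ (coef m • C ^ (m - 1))) =
              colLM μ (∑' m : ℕ, coef m • C ^ (m - 1)) from
                (hb.map_tsum (colLM μ) hΨc).symm]
          rw [hcol]
          rfl
  · intro hU
    have hCN : C * (∑' m : ℕ, coef m • C ^ (m - 1)) = ∑' m : ℕ, coef m • C ^ m := by
      have h1 : mulLM C (∑' m : ℕ, coef m • C ^ (m - 1)) =
          ∑' m : ℕ, mulLM C (coef m • C ^ (m - 1)) := hb.map_tsum (mulLM C) hΞc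
      have h2 : ∀ m : ℕ, mulLM C (coef m • C ^ (m - 1)) = coef m • C ^ m := by
        intro m
        cases m with
        | zero => simp [hcoef0, mulLM]
        | succ k =>
          simp only [mulLM, LinearMap.coe_mk, AddHom.coe_mk, Nat.add_sub_cancel,
            Matrix.mul_smul, ← pow_succ']
      calc C * (∑' m : ℕ, coef m • C ^ (m - 1))
          = mulLM C (∑' m : ℕ, coef m • C ^ (m - 1)) := rfl
        _ = ∑' m : ℕ, mulLM C (coef m • C ^ (m - 1)) := h1
        _ = ∑' m : ℕ, coef m • C ^ m := tsum_congr h2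
    have hinv : C⁻¹ * (∑' m : ℕ, coef m • C ^ m) = ∑' m : ℕ, coef m • C ^ (m - 1) := by
      rw [← hCN, ← mul_assoc, Matrix.nonsing_inv_mul C ((Matrix.isUnit_iff_isUnit_det C).mp hU),
        one_mul]
    rw [hinv]
end

section
/- The matrix exponential exp maps the set A(n+1) = {[[X, t],[0ᵀ, 0]] : X ∈ ℝ^{n×n} upper triangular, t ∈ ℝⁿ} bijectively onto the set A⁺(n+1) = {[[Z, μ],[0ᵀ, 1]] : Z ∈ ℝ^{n×n} upper triangular with positive diagonal entries, μ ∈ ℝⁿ}. -/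
set_option maxHeartbeats 1000000

open Matrix
open scoped Matrix.Norms.L2Operator

/-- The matrix exponential `exp B = Σ_{k≥0} (1/k!) Bᵏ`. -/
noncomputable def mexp {n : ℕ} (B : Matrix (Fin n ⊕ Fin 1) (Fin n ⊕ Fin 1) ℝ) :
    Matrix (Fin n ⊕ Fin 1) (Fin n ⊕ Fin 1) ℝ :=
  ∑' k : ℕ, ((k.factorial : ℝ))⁻¹ • B ^ k

/-- `A(n+1)`: block matrices `[[X, t],[0ᵀ, 0]]` with `X` upper triangular. -/
def algSet (n : ℕ) : Set (Matrix (Fin n ⊕ Fin 1) (Fin n ⊕ Fin 1) ℝ) :=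
  {M | ∃ (X : Matrix (Fin n) (Fin n) ℝ) (t : Fin n → ℝ),
    (∀ i j, j < i → X i j = 0) ∧
    M = Matrix.fromBlocks X (Matrix.of fun i (_ : Fin 1) => t i) 0 0}

/-- `A⁺(n+1)`: block matrices `[[Z, μ],[0ᵀ, 1]]` with `Z` upper triangular with
positive diagonal. -/
def grpSet (n : ℕ) : Set (Matrix (Fin n ⊕ Fin 1) (Fin n ⊕ Fin 1) ℝ) :=
  {M | ∃ (Z : Matrix (Fin n) (Fin n) ℝ) (μ : Fin n → ℝ),
    (∀ i j, j < i → Z i j = 0) ∧ (∀ i, 0 < Z i i) ∧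
    M = Matrix.fromBlocks Z (Matrix.of fun i (_ : Fin 1) => μ i) 0 1}

namespace ExpAux

open NormedSpace

section HasSumExp
attribute [local instance] Matrix.linftyOpNormedRing Matrix.linftyOpNormedAlgebra

theorem hasSum_exp {m : Type*} [Fintype m] [DecidableEq m] (B : Matrix m m ℝ) :
    HasSum (fun k : ℕ => ((k.factorial : ℝ))⁻¹ • B ^ k) (exp B) := by
  exact open scoped Matrix.Norms.Operator in exp_series_hasSum_exp' B

end HasSumExp

variable {m p : Type*} [Fintype m] [DecidableEq m] [Fintype p] [DecidableEq p]

theorem fromBlocks_pow (A : Matrix m m ℝ) (B : Matrix m p ℝ) (D : Matrix p p ℝ) (k : ℕ) :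
    (fromBlocks A B 0 D) ^ k =
      fromBlocks (A ^ k) (∑ j ∈ Finset.range k, A ^ j * B * D ^ (k - 1 - j)) 0 (D ^ k) := by
  induction k with
  | zero => simp [← fromBlocks_one]
  | succ k ih =>
      rw [pow_succ, ih, fromBlocks_multiply]
      have h2 : A ^ k * B + (∑ j ∈ Finset.range k, A ^ j * B * D ^ (k - 1 - j)) * D
          = ∑ j ∈ Finset.range (k + 1), A ^ j * B * D ^ (k + 1 - 1 - j) := by
        rw [Finset.sum_range_succ, Matrix.sum_mul]
        simp only [Nat.add_sub_cancel, Nat.sub_self, pow_zero, mul_one]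
        rw [add_comm]
        congr 1
        · refine Finset.sum_congr rfl fun j hj => ?_
          rw [Finset.mem_range] at hj
          rw [Matrix.mul_assoc (A ^ j * B), ← pow_succ]
          congr 2
          omega
        · exact (Matrix.mul_one _).symm
      rw [← pow_succ, ← pow_succ, ← h2]
      congr 1 <;> simp

/-- evaluation of a matrix entry, as an `AddMonoidHom`. -/
def evalHom (i : m) (j : p) : Matrix m p ℝ →+ ℝ :=
  AddMonoidHom.mk' (fun M => M i j) (fun _ _ => rfl)

def tb11 : Matrix (m ⊕ p) (m ⊕ p) ℝ →+ Matrix m m ℝ :=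
  AddMonoidHom.mk' Matrix.toBlocks₁₁ (fun _ _ => rfl)

def tb12 : Matrix (m ⊕ p) (m ⊕ p) ℝ →+ Matrix m p ℝ :=
  AddMonoidHom.mk' Matrix.toBlocks₁₂ (fun _ _ => rfl)

def tb21 : Matrix (m ⊕ p) (m ⊕ p) ℝ →+ Matrix p m ℝ :=
  AddMonoidHom.mk' Matrix.toBlocks₂₁ (fun _ _ => rfl)

def tb22 : Matrix (m ⊕ p) (m ⊕ p) ℝ →+ Matrix p p ℝ :=
  AddMonoidHom.mk' Matrix.toBlocks₂₂ (fun _ _ => rfl)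

theorem continuous_tb11 : Continuous (tb11 (m := m) (p := p)) :=
  continuous_id.matrix_submatrix _ _
theorem continuous_tb12 : Continuous (tb12 (m := m) (p := p)) :=
  continuous_id.matrix_submatrix _ _
theorem continuous_tb21 : Continuous (tb21 (m := m) (p := p)) :=
  continuous_id.matrix_submatrix _ _
theorem continuous_tb22 : Continuous (tb22 (m := m) (p := p)) :=
  continuous_id.matrix_submatrix _ _

noncomputable def offBlock (A : Matrix m m ℝ) (B : Matrix m p ℝ) (D : Matrix p p ℝ) :
    Matrix m p ℝ :=
  ∑' k : ℕ, ((k.factorial : ℝ))⁻¹ • ∑ j ∈ Finset.range k, A ^ j * B * D ^ (k - 1 - j)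

theorem hasSum_toBlocks12 (A : Matrix m m ℝ) (B : Matrix m p ℝ) (D : Matrix p p ℝ) :
    HasSum (fun k : ℕ => ((k.factorial : ℝ))⁻¹ • ∑ j ∈ Finset.range k, A ^ j * B * D ^ (k - 1 - j))
      ((exp (fromBlocks A B 0 D)).toBlocks₁₂) := by
  have h := (hasSum_exp (fromBlocks A B 0 D)).map tb12 continuous_tb12
  have he : ∀ k : ℕ, tb12 (((k.factorial : ℝ))⁻¹ • fromBlocks A B 0 D ^ k)
      = ((k.factorial : ℝ))⁻¹ • ∑ j ∈ Finset.range k, A ^ j * B * D ^ (k - 1 - j) := by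
    intro k
    show (((k.factorial : ℝ))⁻¹ • fromBlocks A B 0 D ^ k).toBlocks₁₂ = _
    rw [fromBlocks_pow]
    rfl
  simp only [Function.comp_def, he] at h
  exact h

theorem exp_fromBlocks (A : Matrix m m ℝ) (B : Matrix m p ℝ) (D : Matrix p p ℝ) :
    exp (fromBlocks A B 0 D) = fromBlocks (exp A) (offBlock A B D) 0 (exp D) := by
  rw [← fromBlocks_toBlocks (exp (fromBlocks A B 0 D))]
  have h11 : (exp (fromBlocks A B 0 D)).toBlocks₁₁ = exp A := by
    have h := (hasSum_exp (fromBlocks A B 0 D)).map tb11 continuous_tb11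
    have he : ∀ k : ℕ, tb11 (((k.factorial : ℝ))⁻¹ • fromBlocks A B 0 D ^ k)
        = ((k.factorial : ℝ))⁻¹ • A ^ k := by
      intro k
      show (((k.factorial : ℝ))⁻¹ • fromBlocks A B 0 D ^ k).toBlocks₁₁ = _
      rw [fromBlocks_pow]; rfl
    simp only [Function.comp_def, he] at h
    exact h.unique (hasSum_exp A)
  have h22 : (exp (fromBlocks A B 0 D)).toBlocks₂₂ = exp D := by
    have h := (hasSum_exp (fromBlocks A B 0 D)).map tb22 continuous_tb22
    have he : ∀ k : ℕ, tb22 (((k.factorial : ℝ))⁻¹ • fromBlocks A B 0 D ^ k)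
        = ((k.factorial : ℝ))⁻¹ • D ^ k := by
      intro k
      show (((k.factorial : ℝ))⁻¹ • fromBlocks A B 0 D ^ k).toBlocks₂₂ = _
      rw [fromBlocks_pow]; rfl
    simp only [Function.comp_def, he] at h
    exact h.unique (hasSum_exp D)
  have h21 : (exp (fromBlocks A B 0 D)).toBlocks₂₁ = 0 := by
    have h := (hasSum_exp (fromBlocks A B 0 D)).map tb21 continuous_tb21
    have he : ∀ k : ℕ, tb21 (((k.factorial : ℝ))⁻¹ • fromBlocks A B 0 D ^ k) = 0 := by
      intro k
      show (((k.factorial : ℝ))⁻¹ • fromBlocks A B 0 D ^ k).toBlocks₂₁ = _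
      rw [fromBlocks_pow]
      show ((k.factorial : ℝ))⁻¹ • (0 : Matrix p m ℝ) = 0
      simp
    simp only [Function.comp_def, he] at h
    exact h.unique hasSum_zero
  have h12 : (exp (fromBlocks A B 0 D)).toBlocks₁₂ = offBlock A B D :=
    ((hasSum_toBlocks12 A B D).tsum_eq).symm
  rw [h11, h22, h21, h12]

theorem hasSum_offBlock (A : Matrix m m ℝ) (B : Matrix m p ℝ) (D : Matrix p p ℝ) :
    HasSum (fun k : ℕ => ((k.factorial : ℝ))⁻¹ • ∑ j ∈ Finset.range k, A ^ j * B * D ^ (k - 1 - j))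
      (offBlock A B D) := by
  have := hasSum_toBlocks12 A B D
  rwa [exp_fromBlocks, toBlocks_fromBlocks₁₂] at this


/-- the coefficient matrix `Φ A d`. -/
noncomputable def Phi (A : Matrix m m ℝ) (d : ℝ) : Matrix m m ℝ :=
  offBlock A 1 (d • (1 : Matrix m m ℝ))

theorem hasSum_Phi (A : Matrix m m ℝ) (d : ℝ) :
    HasSum (fun k : ℕ => ((k.factorial : ℝ))⁻¹ • ∑ j ∈ Finset.range k, d ^ (k - 1 - j) • A ^ j)
      (Phi A d) := by
  have h := hasSum_offBlock A (1 : Matrix m m ℝ) (d • (1 : Matrix m m ℝ))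
  have he : ∀ k j : ℕ, A ^ j * (1 : Matrix m m ℝ) * (d • (1 : Matrix m m ℝ)) ^ (k - 1 - j)
      = d ^ (k - 1 - j) • A ^ j := by
    intro k j
    rw [Matrix.mul_one, smul_pow, one_pow, Matrix.mul_smul, Matrix.mul_one]
  simpa only [he, Phi] using h

theorem offBlock_factor (A : Matrix m m ℝ) (B : Matrix m p ℝ) (d : ℝ) :
    offBlock A B (d • (1 : Matrix p p ℝ)) = Phi A d * B := by
  have h := (hasSum_Phi A d).map
    (AddMonoidHom.mk' (fun M : Matrix m m ℝ => M * B) (fun _ _ => Matrix.add_mul _ _ _))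
    (continuous_id.matrix_mul continuous_const)
  have he : ∀ k : ℕ,
      ((((k.factorial : ℝ))⁻¹ • ∑ j ∈ Finset.range k, d ^ (k - 1 - j) • A ^ j) * B)
      = ((k.factorial : ℝ))⁻¹ • ∑ j ∈ Finset.range k, A ^ j * B * (d • (1 : Matrix p p ℝ)) ^ (k - 1 - j) := by
    intro k
    rw [Matrix.smul_mul, Matrix.sum_mul]
    congr 1
    refine Finset.sum_congr rfl fun j _ => ?_
    rw [smul_pow, one_pow, Matrix.mul_smul, Matrix.mul_one, Matrix.smul_mul]
  simp only [Function.comp_def, AddMonoidHom.mk'_apply, he] at h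
  exact ((hasSum_offBlock A B (d • (1 : Matrix p p ℝ))).unique h)

/-- entrywise `HasSum` for `Phi`. -/
theorem hasSum_Phi_apply (A : Matrix m m ℝ) (d : ℝ) (i j : m) :
    HasSum (fun k : ℕ => ((k.factorial : ℝ))⁻¹ * ∑ l ∈ Finset.range k, d ^ (k - 1 - l) * (A ^ l) i j)
      (Phi A d i j) := by
  have h := (hasSum_Phi A d).map
    (AddMonoidHom.mk' (fun M : Matrix m m ℝ => M i j) (fun _ _ => rfl))
    ((continuous_id.matrix_elem i j))
  have he : ∀ k : ℕ,
      ((((k.factorial : ℝ))⁻¹ • ∑ l ∈ Finset.range k, d ^ (k - 1 - l) • A ^ l) i j)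
      = ((k.factorial : ℝ))⁻¹ * ∑ l ∈ Finset.range k, d ^ (k - 1 - l) * (A ^ l) i j := by
    intro k
    simp [Matrix.sum_apply]
  rw [← funext he]; exact h

section Triangular
variable {N : ℕ}

theorem bt_pow {A : Matrix (Fin N) (Fin N) ℝ} (hA : A.BlockTriangular id) (l : ℕ) :
    (A ^ l).BlockTriangular id := by
  induction l with
  | zero => rw [pow_zero]; exact Matrix.blockTriangular_one
  | succ l ih => rw [pow_succ]; exact ih.mul hA

theorem diag_pow {A : Matrix (Fin N) (Fin N) ℝ} (hA : A.BlockTriangular id) (i : Fin N) (l : ℕ) :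
    (A ^ l) i i = (A i i) ^ l := by
  induction l with
  | zero => simp
  | succ l ih =>
      rw [pow_succ, pow_succ, Matrix.mul_apply]
      rw [Finset.sum_eq_single i]
      · rw [ih]
      · intro b _ hb
        rcases lt_or_gt_of_ne hb with h | h
        · rw [(bt_pow hA l) (show id b < id i from h), zero_mul]
        · rw [hA (show id i < id b from h), mul_zero]
      · intro h; exact absurd (Finset.mem_univ i) h

theorem Phi_blockTriangular {A : Matrix (Fin N) (Fin N) ℝ} (hA : A.BlockTriangular id) (d : ℝ) :
    (Phi A d).BlockTriangular id := by
  intro i j hij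
  have h := hasSum_Phi_apply A d i j
  have he : ∀ k : ℕ,
      ((k.factorial : ℝ))⁻¹ * ∑ l ∈ Finset.range k, d ^ (k - 1 - l) * (A ^ l) i j = 0 := by
    intro k
    rw [Finset.sum_eq_zero, mul_zero]
    intro l _
    rw [(bt_pow hA l) hij, mul_zero]
  rw [funext he] at h
  exact h.unique hasSum_zero

/-- positivity of the scalar series `φ`. -/
theorem pos_of_hasSum_phi {x d s : ℝ}
    (hs : HasSum (fun k : ℕ => ((k.factorial : ℝ))⁻¹ * ∑ l ∈ Finset.range k, d ^ (k - 1 - l) * x ^ l) s) :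
    0 < s := by
  have hexp : ∀ y : ℝ, HasSum (fun k : ℕ => ((k.factorial : ℝ))⁻¹ * y ^ k) (Real.exp y) := by
    intro y
    have := exp_series_hasSum_exp' (𝕂 := ℝ) y
    simpa [Real.exp_eq_exp_ℝ, smul_eq_mul] using this
  rcases eq_or_ne x d with rfl | hxd
  · -- s = exp x
    have hf : ∀ k : ℕ, ((k.factorial : ℝ))⁻¹ * ∑ l ∈ Finset.range k, x ^ (k - 1 - l) * x ^ l
        = (k : ℝ) * ((k.factorial : ℝ))⁻¹ * x ^ (k - 1) := by
      intro k
      have hterm : ∀ l ∈ Finset.range k, x ^ (k - 1 - l) * x ^ l = x ^ (k - 1) := by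
        intro l hl
        rw [Finset.mem_range] at hl
        rw [← pow_add]
        congr 1
        omega
      rw [Finset.sum_congr rfl hterm, Finset.sum_const, Finset.card_range, nsmul_eq_mul]
      ring
    rw [funext hf] at hs
    have h1 : HasSum (fun k : ℕ => ((k + 1 : ℕ) : ℝ) * (((k + 1).factorial : ℝ))⁻¹ * x ^ (k + 1 - 1))
        (s - ∑ i ∈ Finset.range 1, ((i : ℝ) * ((i.factorial : ℝ))⁻¹ * x ^ (i - 1))) :=
      (hasSum_nat_add_iff' 1).mpr (by simpa using hs)
    have h2 : ∀ k : ℕ, ((k + 1 : ℕ) : ℝ) * (((k + 1).factorial : ℝ))⁻¹ * x ^ (k + 1 - 1)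
        = ((k.factorial : ℝ))⁻¹ * x ^ k := by
      intro k
      rw [Nat.factorial_succ, Nat.cast_mul]
      rw [mul_inv]
      have : ((k + 1 : ℕ) : ℝ) ≠ 0 := by positivity
      field_simp
      rw [Nat.add_sub_cancel]
    rw [funext h2] at h1
    have := (hexp x).unique h1
    simp only [Finset.range_one, Finset.sum_singleton, Nat.cast_zero, zero_mul] at this
    have hs' : s = Real.exp x := by linarith
    rw [hs']; exact Real.exp_pos x
  · -- s * (x - d) = exp x - exp d
    have hmul : HasSum (fun k : ℕ => (((k.factorial : ℝ))⁻¹ * ∑ l ∈ Finset.range k, d ^ (k - 1 - l) * x ^ l) * (x - d))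
        (s * (x - d)) := hs.mul_right _
    have hgeom : ∀ k : ℕ,
        (((k.factorial : ℝ))⁻¹ * ∑ l ∈ Finset.range k, d ^ (k - 1 - l) * x ^ l) * (x - d)
        = ((k.factorial : ℝ))⁻¹ * x ^ k - ((k.factorial : ℝ))⁻¹ * d ^ k := by
      intro k
      have hg : (∑ l ∈ Finset.range k, x ^ l * d ^ (k - 1 - l)) * (x - d) = x ^ k - d ^ k :=
        geom_sum₂_mul x d k
      have : (∑ l ∈ Finset.range k, d ^ (k - 1 - l) * x ^ l) * (x - d) = x ^ k - d ^ k := by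
        rw [← hg]; congr 1; exact Finset.sum_congr rfl fun l _ => mul_comm _ _
      rw [mul_assoc, this, mul_sub]
    rw [funext hgeom] at hmul
    have hsub : HasSum (fun k : ℕ => ((k.factorial : ℝ))⁻¹ * x ^ k - ((k.factorial : ℝ))⁻¹ * d ^ k)
        (Real.exp x - Real.exp d) := (hexp x).sub (hexp d)
    have key : s * (x - d) = Real.exp x - Real.exp d := hmul.unique hsub
    have hxd' : x - d ≠ 0 := sub_ne_zero.mpr hxd
    have hs' : s = (Real.exp x - Real.exp d) / (x - d) := by
      field_simp at key ⊢
      linarith [key]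
    rw [hs']
    rcases lt_or_gt_of_ne hxd with h | h
    · apply div_pos_of_neg_of_neg
      · simp only [sub_neg]; exact Real.exp_lt_exp.mpr h
      · linarith
    · apply div_pos
      · simp only [sub_pos]; exact Real.exp_lt_exp.mpr h
      · linarith

theorem Phi_diag_pos {A : Matrix (Fin N) (Fin N) ℝ} (hA : A.BlockTriangular id) (d : ℝ) (i : Fin N) :
    0 < Phi A d i i := by
  have h := hasSum_Phi_apply A d i i
  have he : ∀ k : ℕ,
      ((k.factorial : ℝ))⁻¹ * ∑ l ∈ Finset.range k, d ^ (k - 1 - l) * (A ^ l) i i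
      = ((k.factorial : ℝ))⁻¹ * ∑ l ∈ Finset.range k, d ^ (k - 1 - l) * (A i i) ^ l := by
    intro k; congr 1; exact Finset.sum_congr rfl fun l _ => by rw [diag_pow hA]
  rw [funext he] at h
  exact pos_of_hasSum_phi h

theorem Phi_det_isUnit {A : Matrix (Fin N) (Fin N) ℝ} (hA : A.BlockTriangular id) (d : ℝ) :
    IsUnit (Phi A d).det := by
  rw [Matrix.det_of_upperTriangular (Phi_blockTriangular hA d)]
  refine (Finset.prod_pos fun i _ => Phi_diag_pos hA d i).ne'.isUnit

end Triangular

theorem exp_fromBlocks'' {m' p' : Type*} [Fintype m'] [DecidableEq m'] [Fintype p'] [DecidableEq p']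
    (A : Matrix m' m' ℝ) (B : Matrix m' p' ℝ) (d : ℝ) :
    exp (fromBlocks A B 0 (d • (1 : Matrix p' p' ℝ)))
      = fromBlocks (exp A) (Phi A d * B) 0 (exp (d • (1 : Matrix p' p' ℝ))) := by
  rw [exp_fromBlocks, offBlock_factor]

theorem exp_smul_one (d : ℝ) :
    exp (d • (1 : Matrix (Fin 1) (Fin 1) ℝ)) = Real.exp d • 1 := by
  have hexp : HasSum (fun k : ℕ => ((k.factorial : ℝ))⁻¹ * d ^ k) (Real.exp d) := by
    have := exp_series_hasSum_exp' (𝕂 := ℝ) d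
    simpa [Real.exp_eq_exp_ℝ, smul_eq_mul] using this
  have h := hexp.map
    (AddMonoidHom.mk' (fun r : ℝ => r • (1 : Matrix (Fin 1) (Fin 1) ℝ)) (fun _ _ => add_smul _ _ _))
    (continuous_id.smul continuous_const)
  have he : ∀ k : ℕ, (((k.factorial : ℝ))⁻¹ * d ^ k) • (1 : Matrix (Fin 1) (Fin 1) ℝ)
      = ((k.factorial : ℝ))⁻¹ • (d • (1 : Matrix (Fin 1) (Fin 1) ℝ)) ^ k := by
    intro k
    rw [smul_pow, one_pow, smul_smul]
  simp only [Function.comp_def, AddMonoidHom.mk'_apply, he] at h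
  exact ((hasSum_exp _).unique h)

theorem one_dim (D : Matrix (Fin 1) (Fin 1) ℝ) : D = D 0 0 • 1 := by
  ext i j
  fin_cases i; fin_cases j
  simp

theorem smul_one_apply (d : ℝ) : (d • (1 : Matrix (Fin 1) (Fin 1) ℝ)) 0 0 = d := by simp

section SumLevel

variable {N : ℕ}

/-- exp of a block matrix `[[X, T],[0, D]]`. -/
theorem sum_exp_eq (X : Matrix (Fin N) (Fin N) ℝ) (T : Matrix (Fin N) (Fin 1) ℝ)
    (D : Matrix (Fin 1) (Fin 1) ℝ) :
    exp (fromBlocks X T 0 D)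
      = fromBlocks (exp X) (Phi X (D 0 0) * T) 0 (Real.exp (D 0 0) • 1) := by
  have hD : D = D 0 0 • 1 := one_dim D
  calc exp (fromBlocks X T 0 D)
      = exp (fromBlocks X T 0 (D 0 0 • 1)) := by rw [← hD]
    _ = fromBlocks (exp X) (Phi X (D 0 0) * T) 0 (exp (D 0 0 • (1 : Matrix (Fin 1) (Fin 1) ℝ))) :=
        exp_fromBlocks'' X T (D 0 0)
    _ = fromBlocks (exp X) (Phi X (D 0 0) * T) 0 (Real.exp (D 0 0) • 1) := by
        rw [exp_smul_one]

theorem sum_maps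
    (ih : ∀ M : Matrix (Fin N) (Fin N) ℝ, M.BlockTriangular id →
      ((exp M).BlockTriangular id ∧ ∀ i, (exp M) i i = Real.exp (M i i)))
    (B : Matrix (Fin N ⊕ Fin 1) (Fin N ⊕ Fin 1) ℝ)
    (hX : (B.toBlocks₁₁).BlockTriangular id) (h21 : B.toBlocks₂₁ = 0) :
    ((exp B).toBlocks₁₁).BlockTriangular id ∧ (exp B).toBlocks₂₁ = 0 ∧
      (∀ x, exp B x x = Real.exp (B x x)) := by
  have hBdec : B = fromBlocks B.toBlocks₁₁ B.toBlocks₁₂ 0 B.toBlocks₂₂ := by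
    conv_lhs => rw [← fromBlocks_toBlocks B]
    rw [h21]
  obtain ⟨hbt, hdiag⟩ := ih B.toBlocks₁₁ hX
  have hE : exp B = fromBlocks (exp B.toBlocks₁₁)
      (Phi B.toBlocks₁₁ (B.toBlocks₂₂ 0 0) * B.toBlocks₁₂) 0
      (Real.exp (B.toBlocks₂₂ 0 0) • 1) := by
    conv_lhs => rw [hBdec]
    exact sum_exp_eq _ _ _
  refine ⟨?_, ?_, ?_⟩
  · rw [hE, toBlocks_fromBlocks₁₁]; exact hbt
  · rw [hE, toBlocks_fromBlocks₂₁]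
  · intro x
    cases x with
    | inl i =>
        have : exp B (Sum.inl i) (Sum.inl i) = (exp B).toBlocks₁₁ i i := rfl
        rw [this, hE, toBlocks_fromBlocks₁₁, hdiag]
        rfl
    | inr j =>
        obtain rfl : j = (0 : Fin 1) := Subsingleton.elim _ _
        have : exp B (Sum.inr 0) (Sum.inr 0) = (exp B).toBlocks₂₂ 0 0 := rfl
        rw [this, hE, toBlocks_fromBlocks₂₂, smul_one_apply]
        rfl

theorem sum_inj
    (ih : ∀ M M' : Matrix (Fin N) (Fin N) ℝ, M.BlockTriangular id → M'.BlockTriangular id →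
      exp M = exp M' → M = M')
    (B B' : Matrix (Fin N ⊕ Fin 1) (Fin N ⊕ Fin 1) ℝ)
    (hX : (B.toBlocks₁₁).BlockTriangular id) (h21 : B.toBlocks₂₁ = 0)
    (hX' : (B'.toBlocks₁₁).BlockTriangular id) (h21' : B'.toBlocks₂₁ = 0)
    (hE : exp B = exp B') : B = B' := by
  have hBdec : B = fromBlocks B.toBlocks₁₁ B.toBlocks₁₂ 0 B.toBlocks₂₂ := by
    conv_lhs => rw [← fromBlocks_toBlocks B]; rw [h21]
  have hBdec' : B' = fromBlocks B'.toBlocks₁₁ B'.toBlocks₁₂ 0 B'.toBlocks₂₂ := by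
    conv_lhs => rw [← fromBlocks_toBlocks B']; rw [h21']
  rw [hBdec, hBdec'] at hE ⊢
  rw [sum_exp_eq, sum_exp_eq, fromBlocks_inj] at hE
  obtain ⟨e11, e12, -, e22⟩ := hE
  have hXX : B.toBlocks₁₁ = B'.toBlocks₁₁ := ih _ _ hX hX' e11
  have hdd : B.toBlocks₂₂ 0 0 = B'.toBlocks₂₂ 0 0 := by
    have := congrFun (congrFun e22 0) 0
    simp only [smul_one_apply] at this
    exact Real.exp_injective this
  have hDD : B.toBlocks₂₂ = B'.toBlocks₂₂ := by
    rw [one_dim B.toBlocks₂₂, one_dim B'.toBlocks₂₂, hdd]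
  have hTT : B.toBlocks₁₂ = B'.toBlocks₁₂ := by
    rw [hXX, hdd] at e12
    calc B.toBlocks₁₂ = (Phi B'.toBlocks₁₁ (B'.toBlocks₂₂ 0 0))⁻¹ *
          (Phi B'.toBlocks₁₁ (B'.toBlocks₂₂ 0 0) * B.toBlocks₁₂) :=
        (Matrix.nonsing_inv_mul_cancel_left _ _ (Phi_det_isUnit hX' _)).symm
      _ = (Phi B'.toBlocks₁₁ (B'.toBlocks₂₂ 0 0))⁻¹ *
          (Phi B'.toBlocks₁₁ (B'.toBlocks₂₂ 0 0) * B'.toBlocks₁₂) := by rw [e12]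
      _ = B'.toBlocks₁₂ := Matrix.nonsing_inv_mul_cancel_left _ _ (Phi_det_isUnit hX' _)
  rw [hXX, hTT, hDD]

theorem sum_surj
    (ih : ∀ Z : Matrix (Fin N) (Fin N) ℝ, Z.BlockTriangular id → (∀ i, 0 < Z i i) →
      ∃ M, M.BlockTriangular id ∧ exp M = Z)
    (C : Matrix (Fin N ⊕ Fin 1) (Fin N ⊕ Fin 1) ℝ)
    (hW : (C.toBlocks₁₁).BlockTriangular id) (h21 : C.toBlocks₂₁ = 0)
    (hpos : ∀ x, 0 < C x x) :
    ∃ B : Matrix (Fin N ⊕ Fin 1) (Fin N ⊕ Fin 1) ℝ,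
      (B.toBlocks₁₁).BlockTriangular id ∧ B.toBlocks₂₁ = 0 ∧
        B.toBlocks₂₂ = Real.log (C.toBlocks₂₂ 0 0) • (1 : Matrix (Fin 1) (Fin 1) ℝ) ∧
        exp B = C := by
  obtain ⟨X, hXbt, hXexp⟩ := ih C.toBlocks₁₁ hW (fun i => hpos (Sum.inl i))
  set d : ℝ := Real.log (C.toBlocks₂₂ 0 0) with hd
  set T : Matrix (Fin N) (Fin 1) ℝ := (Phi X d)⁻¹ * C.toBlocks₁₂ with hT
  refine ⟨fromBlocks X T 0 (d • 1), ?_, ?_, ?_, ?_⟩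
  · rw [toBlocks_fromBlocks₁₁]; exact hXbt
  · rw [toBlocks_fromBlocks₂₁]
  · rw [toBlocks_fromBlocks₂₂]
  · rw [sum_exp_eq, smul_one_apply, hXexp]
    have h1 : Phi X d * T = C.toBlocks₁₂ :=
      Matrix.mul_nonsing_inv_cancel_left _ _ (Phi_det_isUnit hXbt d)
    have h2 : Real.exp d • (1 : Matrix (Fin 1) (Fin 1) ℝ) = C.toBlocks₂₂ := by
      have hp : 0 < C.toBlocks₂₂ 0 0 := hpos (Sum.inr 0)
      rw [hd, Real.exp_log hp, ← one_dim]
    rw [h1, h2]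
    conv_rhs => rw [← fromBlocks_toBlocks C]
    rw [h21]

end SumLevel

theorem mexp_eq {n : ℕ} (B : Matrix (Fin n ⊕ Fin 1) (Fin n ⊕ Fin 1) ℝ) :
    mexp B = exp B := by
  rw [NormedSpace.exp_eq_tsum (𝕂 := ℝ)]; rfl

theorem bt_sum_iff {N : ℕ} (B : Matrix (Fin N ⊕ Fin 1) (Fin N ⊕ Fin 1) ℝ) :
    B.BlockTriangular (fun x => (finSumFinEquiv x : Fin (N + 1))) ↔
      ((B.toBlocks₁₁).BlockTriangular id ∧ B.toBlocks₂₁ = 0) := by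
  have hvl : ∀ i : Fin N, ((finSumFinEquiv (Sum.inl i) : Fin (N + 1)) : ℕ) = (i : ℕ) := by
    intro i; simp
  have hvr : ∀ j : Fin 1, ((finSumFinEquiv (Sum.inr j) : Fin (N + 1)) : ℕ) = N := by
    intro j
    obtain rfl : j = (0 : Fin 1) := Subsingleton.elim _ _
    simp
  constructor
  · intro h
    constructor
    · intro i j hij
      exact h (show (finSumFinEquiv (Sum.inl j) : Fin (N+1)) < finSumFinEquiv (Sum.inl i) by
        rw [Fin.lt_def, hvl, hvl]; exact hij)
    · ext i j
      have : B (Sum.inr i) (Sum.inl j) = 0 := h (show (finSumFinEquiv (Sum.inl j) : Fin (N+1)) < finSumFinEquiv (Sum.inr i) by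
        rw [Fin.lt_def, hvl, hvr]; exact j.isLt)
      exact this
  · rintro ⟨h1, h2⟩ a b hab
    rw [Fin.lt_def] at hab
    cases a with
    | inl i =>
        cases b with
        | inl j =>
            rw [hvl, hvl] at hab
            exact h1 (show (id j : Fin N) < id i from hab)
        | inr j =>
            rw [hvr, hvl] at hab
            exact absurd hab (by omega)
    | inr i =>
        cases b with
        | inl j => exact congrFun (congrFun h2 i) j
        | inr j =>
            rw [hvr, hvr] at hab
            exact absurd hab (lt_irrefl N)

theorem main (N : ℕ) :
    (∀ M : Matrix (Fin N) (Fin N) ℝ, M.BlockTriangular id →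
      ((exp M).BlockTriangular id ∧ ∀ i, (exp M) i i = Real.exp (M i i))) ∧
    (∀ M M' : Matrix (Fin N) (Fin N) ℝ, M.BlockTriangular id → M'.BlockTriangular id →
      exp M = exp M' → M = M') ∧
    (∀ Z : Matrix (Fin N) (Fin N) ℝ, Z.BlockTriangular id → (∀ i, 0 < Z i i) →
      ∃ M, M.BlockTriangular id ∧ exp M = Z) := by
  induction N with
  | zero =>
      have hsub : ∀ A B : Matrix (Fin 0) (Fin 0) ℝ, A = B := by
        intro A B; ext i j; exact i.elim0
      exact ⟨fun M _ => ⟨fun i j _ => j.elim0, fun i => i.elim0⟩,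
        fun M M' _ _ _ => hsub M M',
        fun Z _ _ => ⟨0, fun i j _ => j.elim0, hsub _ _⟩⟩
  | succ N ih =>
      obtain ⟨ih1, ih2, ih3⟩ := ih
      set e := finSumFinEquiv (m := N) (n := 1) with he
      set R := Matrix.reindexAlgEquiv ℝ ℝ e with hR
      have hexpR : ∀ B, exp (R B) = R (exp B) := fun B =>
        open scoped Matrix.Norms.Operator in (map_exp R (continuous_id.matrix_reindex e e) B).symm
      have hBT : ∀ B : Matrix (Fin N ⊕ Fin 1) (Fin N ⊕ Fin 1) ℝ,
          (R B).BlockTriangular id ↔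
            ((B.toBlocks₁₁).BlockTriangular id ∧ B.toBlocks₂₁ = 0) := by
        intro B
        rw [hR, Matrix.reindexAlgEquiv_apply, Matrix.blockTriangular_reindex_iff]
        exact bt_sum_iff B
      have hApply : ∀ (B : Matrix (Fin N ⊕ Fin 1) (Fin N ⊕ Fin 1) ℝ) (x : Fin N ⊕ Fin 1),
          (R B) (e x) (e x) = B x x := by
        intro B x
        rw [hR, Matrix.reindexAlgEquiv_apply, Matrix.reindex_apply, Matrix.submatrix_apply,
          Equiv.symm_apply_apply]
      refine ⟨?_, ?_, ?_⟩
      · intro M hM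
        set B := R.symm M with hB
        have hMB : M = R B := by rw [hB, AlgEquiv.apply_symm_apply]
        obtain ⟨hX, h21⟩ := (hBT B).mp (by rw [← hMB]; exact hM)
        obtain ⟨m1, m2, m3⟩ := sum_maps ih1 B hX h21
        have hEM : exp M = R (exp B) := by rw [hMB, hexpR]
        constructor
        · rw [hEM]; exact (hBT _).mpr ⟨m1, m2⟩
        · intro p
          obtain ⟨x, rfl⟩ := e.surjective p
          rw [hEM, hApply, m3 x, hMB, hApply]
      · intro M M' hM hM' hE
        set B := R.symm M with hB
        set B' := R.symm M' with hB'
        have hMB : M = R B := by rw [hB, AlgEquiv.apply_symm_apply]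
        have hMB' : M' = R B' := by rw [hB', AlgEquiv.apply_symm_apply]
        obtain ⟨hX, h21⟩ := (hBT B).mp (by rw [← hMB]; exact hM)
        obtain ⟨hX', h21'⟩ := (hBT B').mp (by rw [← hMB']; exact hM')
        have hEB : exp B = exp B' := by
          apply R.injective
          rw [← hexpR, ← hexpR, ← hMB, ← hMB', hE]
        rw [hMB, hMB', sum_inj ih2 B B' hX h21 hX' h21' hEB]
      · intro Z hZ hpos
        set C := R.symm Z with hC
        have hZC : Z = R C := by rw [hC, AlgEquiv.apply_symm_apply]
        obtain ⟨hW, h21⟩ := (hBT C).mp (by rw [← hZC]; exact hZ)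
        have hposC : ∀ x, 0 < C x x := by
          intro x
          have := hpos (e x)
          rw [hZC, hApply] at this
          exact this
        obtain ⟨B, hXbt, hB21, _, hBexp⟩ := sum_surj ih3 C hW h21 hposC
        exact ⟨R B, (hBT B).mpr ⟨hXbt, hB21⟩, by rw [hexpR, hBexp, ← hZC]⟩

theorem algSet_iff {n : ℕ} (M : Matrix (Fin n ⊕ Fin 1) (Fin n ⊕ Fin 1) ℝ) :
    M ∈ algSet n ↔
      ((M.toBlocks₁₁).BlockTriangular id ∧ M.toBlocks₂₁ = 0 ∧ M.toBlocks₂₂ = 0) := by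
  constructor
  · rintro ⟨X, t, hX, rfl⟩
    refine ⟨?_, ?_, ?_⟩
    · rw [toBlocks_fromBlocks₁₁]; exact fun i j h => hX i j h
    · rw [toBlocks_fromBlocks₂₁]
    · rw [toBlocks_fromBlocks₂₂]
  · rintro ⟨h1, h2, h3⟩
    refine ⟨M.toBlocks₁₁, fun i => M.toBlocks₁₂ i 0, fun i j h => h1 h, ?_⟩
    have ht : M.toBlocks₁₂ = Matrix.of fun i (_ : Fin 1) => M.toBlocks₁₂ i 0 := by
      ext i j
      obtain rfl : j = (0 : Fin 1) := Subsingleton.elim _ _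
      rfl
    conv_lhs => rw [← fromBlocks_toBlocks M]
    rw [h2, h3]
    exact congrArg (fun T => fromBlocks M.toBlocks₁₁ T (0 : Matrix (Fin 1) (Fin n) ℝ)
      (0 : Matrix (Fin 1) (Fin 1) ℝ)) ht

theorem grpSet_iff {n : ℕ} (K : Matrix (Fin n ⊕ Fin 1) (Fin n ⊕ Fin 1) ℝ) :
    K ∈ grpSet n ↔
      ((K.toBlocks₁₁).BlockTriangular id ∧ (∀ i, 0 < K.toBlocks₁₁ i i) ∧
        K.toBlocks₂₁ = 0 ∧ K.toBlocks₂₂ = 1) := by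
  constructor
  · rintro ⟨Z, μ, hZ, hpos, rfl⟩
    refine ⟨?_, ?_, ?_, ?_⟩
    · rw [toBlocks_fromBlocks₁₁]; exact fun i j h => hZ i j h
    · rw [toBlocks_fromBlocks₁₁]; exact hpos
    · rw [toBlocks_fromBlocks₂₁]
    · rw [toBlocks_fromBlocks₂₂]
  · rintro ⟨h1, hpos, h2, h3⟩
    refine ⟨K.toBlocks₁₁, fun i => K.toBlocks₁₂ i 0, fun i j h => h1 h, hpos, ?_⟩
    have ht : K.toBlocks₁₂ = Matrix.of fun i (_ : Fin 1) => K.toBlocks₁₂ i 0 := by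
      ext i j
      obtain rfl : j = (0 : Fin 1) := Subsingleton.elim _ _
      rfl
    conv_lhs => rw [← fromBlocks_toBlocks K]
    rw [h2, h3]
    exact congrArg (fun T => fromBlocks K.toBlocks₁₁ T (0 : Matrix (Fin 1) (Fin n) ℝ)
      (1 : Matrix (Fin 1) (Fin 1) ℝ)) ht


end ExpAux

open ExpAux NormedSpace

/-- the matrix exponential maps `A(n+1)` bijectively onto `A⁺(n+1)`. -/
theorem exp_bijOn_algSet_grpSet (n : ℕ) :
    Set.BijOn mexp (algSet n) (grpSet n) := by
  obtain ⟨m1, m2, m3⟩ := main n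
  refine ⟨?_, ?_, ?_⟩
  · intro M hM
    rw [algSet_iff] at hM
    obtain ⟨hX, h21, h22⟩ := hM
    obtain ⟨e1, e2, e3⟩ := sum_maps m1 M hX h21
    rw [mexp_eq, grpSet_iff]
    refine ⟨e1, ?_, e2, ?_⟩
    · intro i
      have : exp M (Sum.inl i) (Sum.inl i) = Real.exp (M (Sum.inl i) (Sum.inl i)) := e3 _
      show 0 < exp M (Sum.inl i) (Sum.inl i)
      rw [this]; exact Real.exp_pos _
    · ext i j
      obtain rfl : i = (0 : Fin 1) := Subsingleton.elim _ _
      obtain rfl : j = (0 : Fin 1) := Subsingleton.elim _ _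
      show exp M (Sum.inr 0) (Sum.inr 0) = (1 : Matrix (Fin 1) (Fin 1) ℝ) 0 0
      rw [e3]
      have : M (Sum.inr 0) (Sum.inr 0) = 0 := congrFun (congrFun h22 0) 0
      rw [this, Real.exp_zero]
      simp
  · intro M hM M' hM' hE
    rw [algSet_iff] at hM hM'
    rw [mexp_eq, mexp_eq] at hE
    exact sum_inj m2 M M' hM.1 hM.2.1 hM'.1 hM'.2.1 hE
  · intro K hK
    rw [grpSet_iff] at hK
    obtain ⟨h1, hpos, h2, h3⟩ := hK
    have hposAll : ∀ x, 0 < K x x := by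
      intro x
      cases x with
      | inl i => exact hpos i
      | inr j =>
          obtain rfl : j = (0 : Fin 1) := Subsingleton.elim _ _
          show (0 : ℝ) < K.toBlocks₂₂ 0 0
          rw [h3]
          norm_num
    obtain ⟨B, hb1, hb2, hb3, hbexp⟩ := sum_surj m3 K h1 h2 hposAll
    refine ⟨B, ?_, by rw [mexp_eq, hbexp]⟩
    rw [algSet_iff]
    refine ⟨hb1, hb2, ?_⟩
    rw [hb3, h3]
    norm_num
end

section
/- Let p ∈ ℝᵐ, let L be a finite set of points of ℝᵐ not containing p, let σ > 0, and define the second-order orientation tensor T(p, L) = Σ_{s ∈ L} exp(−‖s − p‖₂²/σ²) · v̂_{ps} v̂_{ps}ᵀ, where v̂_{ps} = (s − p)/‖s − p‖₂. Then for every orthogonal matrix R ∈ ℝ^{m×m} and every t ∈ ℝᵐ, with ρ(x) = Rx + t, the tensor computed at ρ(p) over the transformed neighborhood ρ(L) = {ρ(s) : s ∈ L} satisfies T(ρ(p), ρ(L)) = R · T(p, L) · Rᵀ. -/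
open Matrix

/-- The Euclidean norm `‖v‖₂ = √(Σⱼ vⱼ²)` on `ℝᵐ`. -/
noncomputable def enorm2 {m : ℕ} (v : Fin m → ℝ) : ℝ :=
  Real.sqrt (∑ j, v j ^ 2)

/-- The second-order orientation tensor
`T(p, L) = Σ_{s ∈ L} exp(−‖s − p‖₂²/σ²) · v̂_{ps} v̂_{ps}ᵀ`
with `v̂_{ps} = (s − p)/‖s − p‖₂`. -/
noncomputable def orientTensor {m : ℕ} (σ : ℝ) (p : Fin m → ℝ)
    (L : Finset (Fin m → ℝ)) : Matrix (Fin m) (Fin m) ℝ :=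
  ∑ s ∈ L, Real.exp (-(enorm2 (s - p)) ^ 2 / σ ^ 2) •
    Matrix.vecMulVec ((enorm2 (s - p))⁻¹ • (s - p)) ((enorm2 (s - p))⁻¹ • (s - p))

/-- Orthogonal matrices preserve the Euclidean norm. -/
lemma enorm_mulVec {m : ℕ} (R : Matrix (Fin m) (Fin m) ℝ) (hR : Rᵀ * R = 1)
    (v : Fin m → ℝ) : enorm2 (R *ᵥ v) = enorm2 v := by
  unfold enorm2
  congr 1
  have h : (R *ᵥ v) ⬝ᵥ (R *ᵥ v) = v ⬝ᵥ v := by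
    rw [Matrix.dotProduct_mulVec, ← Matrix.vecMul_transpose, Matrix.vecMul_vecMul, hR,
      Matrix.vecMul_one]
  simpa [dotProduct, sq] using h

/-- Outer product transforms by conjugation. -/
lemma vecMulVec_mulVec {m : ℕ} (R : Matrix (Fin m) (Fin m) ℝ) (a b : Fin m → ℝ) :
    Matrix.vecMulVec (R *ᵥ a) (R *ᵥ b) = R * Matrix.vecMulVec a b * Rᵀ := by
  ext i j
  simp [Matrix.vecMulVec, Matrix.mul_apply, Matrix.mulVec, dotProduct,
    Finset.sum_mul, Finset.mul_sum, mul_comm, mul_assoc, mul_left_comm]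

/-- the orientation tensor is equivariant under rigid transformations:
for `ρ(x) = Rx + t` with `R` orthogonal, `T(ρ(p), ρ(L)) = R T(p, L) Rᵀ`. -/
theorem orientTensor_rigid {m : ℕ} [DecidableEq (Fin m → ℝ)]
    (σ : ℝ) (hσ : 0 < σ) (p : Fin m → ℝ) (L : Finset (Fin m → ℝ)) (hp : p ∉ L)
    (R : Matrix (Fin m) (Fin m) ℝ) (hR : Rᵀ * R = 1) (t : Fin m → ℝ) :
    orientTensor σ (R *ᵥ p + t) (L.image fun s => R *ᵥ s + t) =
      R * orientTensor σ p L * Rᵀ := by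
  have hinj : ∀ s ∈ L, ∀ s' ∈ L, R *ᵥ s + t = R *ᵥ s' + t → s = s' := by
    intro s _ s' _ h
    have h2 : R *ᵥ s = R *ᵥ s' := by
      funext i; have := congrFun h i; simpa using this
    have h3 := congrArg (fun w => Rᵀ *ᵥ w) h2
    simpa [Matrix.mulVec_mulVec, hR] using h3
  unfold orientTensor
  rw [Finset.sum_image hinj, Finset.mul_sum, Finset.sum_mul]
  refine Finset.sum_congr rfl fun s hs => ?_
  have hdiff : (R *ᵥ s + t) - (R *ᵥ p + t) = R *ᵥ (s - p) := by
    funext i; simp [Matrix.mulVec, dotProduct, mul_sub, Finset.sum_sub_distrib]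
  rw [hdiff, enorm_mulVec R hR, ← Matrix.mulVec_smul, vecMulVec_mulVec,
    Matrix.mul_smul, Matrix.smul_mul]
end
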